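/- Suppose Π_h is the Ritz projection of the previous setting with lift π_h z = (Π_h z)^ℓ, and in addition: (i) there is an interpolation operator I_h: Z → V_h^ℓ with ‖η − I_hη‖_V ≤ c h^k ‖η‖_Z; (ii) the perturbation bound |a^κ(v_h, φ_h^ℓ) − a_h^κ(V_h, φ_h)| ≤ c h^k ‖v_h‖_V ‖φ_h^ℓ‖_V holds for all discrete functions; then ‖z − π_h z‖_V ≤ C h^k ‖z‖_Z for all z ∈ Z, with C independent of h. -/

import Mathlib

lemma quad_div (a x Q : ℝ) (ha : 0 < a) (hx : 0 ≤ x) (hQ : 0 ≤ Q)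
    (h : a * x ^ 2 ≤ Q * x) : x ≤ Q / a := by
  rcases hx.eq_or_lt with h0 | h0
  · rw [← h0]; positivity
  · rw [le_div_iff₀ ha]
    nlinarith

lemma key_small (αh c₁ M cI cP cE t nz nI nw nlw A B : ℝ)
    (hαh : 0 < αh) (hc₁ : 0 < c₁) (hM : 0 ≤ M) (hcI : 0 ≤ cI) (hcP : 0 ≤ cP)
    (hcE : 0 ≤ cE) (ht : 0 ≤ t) (ht1 : t ≤ 1) (hnz : 0 ≤ nz) (hnlw : 0 ≤ nlw)
    (hlw : c₁ * nlw ≤ nw)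
    (hnI : nI ≤ cE * nz + cI * t * nz)
    (hA : A ≤ M * (cI * t * nz) * nlw)
    (hB : B ≤ cP * t * nI * nlw)
    (hco : αh * nw ^ 2 ≤ A + B) :
    nw ≤ (M * cI + cP * (cE + cI)) / (αh * c₁) * (t * nz) := by
  have hnw : 0 ≤ nw := le_trans (by positivity) hlw
  have h2 : cP * t * nlw * nI ≤ cP * t * nlw * (cE * nz + cI * t * nz) :=
    mul_le_mul_of_nonneg_left hnI (by positivity)
  have ht2 : t * t ≤ t := by nlinarith
  have h3 : cP * cI * (t * t) * (nz * nlw) ≤ cP * cI * t * (nz * nlw) := by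
    have : (0:ℝ) ≤ cP * cI * (nz * nlw) := by positivity
    nlinarith
  have h1 : αh * nw ^ 2 ≤ ((M * cI + cP * (cE + cI)) * (t * nz)) * nlw := by
    nlinarith
  have hQ0 : 0 ≤ (M * cI + cP * (cE + cI)) * (t * nz) := by positivity
  have h4 : nlw ≤ nw / c₁ := (le_div_iff₀ hc₁).2 (by linarith [mul_comm c₁ nlw])
  have h5 : αh * nw ^ 2 ≤ ((M * cI + cP * (cE + cI)) * (t * nz) / c₁) * nw := by
    have := mul_le_mul_of_nonneg_left h4 hQ0
    calc αh * nw ^ 2 ≤ ((M * cI + cP * (cE + cI)) * (t * nz)) * nlw := h1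
      _ ≤ ((M * cI + cP * (cE + cI)) * (t * nz)) * (nw / c₁) := this
      _ = ((M * cI + cP * (cE + cI)) * (t * nz) / c₁) * nw := by ring
  have h6 := quad_div αh nw ((M * cI + cP * (cE + cI)) * (t * nz) / c₁) hαh hnw
    (by positivity) h5
  calc nw ≤ (M * cI + cP * (cE + cI)) * (t * nz) / c₁ / αh := h6
    _ = (M * cI + cP * (cE + cI)) / (αh * c₁) * (t * nz) := by
        rw [div_div, div_mul_eq_mul_div, mul_comm c₁ αh]

lemma final_comb (c₁ cI D C t nz ne i l nw : ℝ) (hc₁ : 0 < c₁) (hD : 0 ≤ D)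
    (hcI : 0 ≤ cI) (ht : 0 ≤ t) (hnz : 0 ≤ nz)
    (h1 : ne ≤ i + l) (h2 : i ≤ cI * t * nz) (h3 : c₁ * l ≤ nw)
    (h4 : nw ≤ D * (t * nz)) (hC : cI + D / c₁ ≤ C) : ne ≤ C * t * nz := by
  have hl : l ≤ D * (t * nz) / c₁ :=
    (le_div_iff₀ hc₁).2 (by linarith [mul_comm c₁ l])
  have heq : cI * t * nz + D * (t * nz) / c₁ = (cI + D / c₁) * (t * nz) := by
    field_simp
  have h5 : (cI + D / c₁) * (t * nz) ≤ C * (t * nz) :=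
    mul_le_mul_of_nonneg_right hC (by positivity)
  nlinarith

lemma final_large (αh c₁ M cE C t nz ne np nlp av : ℝ)
    (hαh : 0 < αh) (hc₁ : 0 < c₁) (hM : 0 ≤ M) (hcE : 0 ≤ cE)
    (ht1 : 1 ≤ t) (hnz : 0 ≤ nz) (hnp : 0 ≤ np) (hnlp : 0 ≤ nlp)
    (hlp : c₁ * nlp ≤ np)
    (hco : αh * np ^ 2 ≤ av) (hav : av ≤ M * (cE * nz) * nlp)
    (hne : ne ≤ cE * nz + nlp)
    (hC : cE + M * cE / (αh * c₁ ^ 2) ≤ C) : ne ≤ C * t * nz := by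
  have h4 : nlp ≤ np / c₁ := (le_div_iff₀ hc₁).2 (by linarith [mul_comm c₁ nlp])
  have h5 : αh * np ^ 2 ≤ (M * (cE * nz) / c₁) * np := by
    have := mul_le_mul_of_nonneg_left h4 (by positivity : (0:ℝ) ≤ M * (cE * nz))
    calc αh * np ^ 2 ≤ av := hco
      _ ≤ M * (cE * nz) * nlp := hav
      _ ≤ M * (cE * nz) * (np / c₁) := this
      _ = (M * (cE * nz) / c₁) * np := by ring
  have h6 := quad_div αh np (M * (cE * nz) / c₁) hαh hnp (by positivity) h5
  have h7 : nlp ≤ M * cE / (αh * c₁ ^ 2) * nz := by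
    calc nlp ≤ np / c₁ := h4
      _ ≤ (M * (cE * nz) / c₁ / αh) / c₁ := by
          exact div_le_div_of_nonneg_right h6 hc₁.le
      _ = M * cE / (αh * c₁ ^ 2) * nz := by field_simp
  have h8 : ne ≤ (cE + M * cE / (αh * c₁ ^ 2)) * nz := by nlinarith
  have hC0 : 0 ≤ C := le_trans (by positivity) hC
  nlinarith [mul_le_mul_of_nonneg_right hC hnz,
    mul_nonneg (mul_nonneg hC0 hnz) (sub_nonneg.2 ht1)]

/-- V-norm error bound for the abstract Ritz projection: with a bounded coercive
form `a^κ` on a Hilbert space `V`, a continuously embedded smooth space `Z`, and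
for each mesh size `h` a finite-dimensional discrete space `V_h` with lift `ℓ`
(two-sided norm equivalence), uniformly coercive and bounded discrete forms
`a_h^κ`, an interpolation operator with rate `h^k` into the lifted space, and a
geometric perturbation bound of order `h^k` on discrete functions, the Ritz
projection `Π_h z` (defined by `a_h^κ(Π_h z, φ_h) = a^κ(z, φ_h^ℓ)`) satisfies
`‖z - π_h z‖_V ≤ C h^k ‖z‖_Z` with `C` independent of `h`. -/
theorem ritz_projection_V_error
    {V : Type*} [NormedAddCommGroup V] [InnerProductSpace ℝ V] [CompleteSpace V]
    {Z : Type*} [NormedAddCommGroup Z] [NormedSpace ℝ Z]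
    (ιZ : Z →ₗ[ℝ] V) (cE : ℝ) (hcE : 0 < cE)
    (hemb : ∀ η : Z, ‖ιZ η‖ ≤ cE * ‖η‖)
    (k : ℕ)
    (α M αh Mh c₁ c₂ cI cP : ℝ)
    (hα : 0 < α) (hM : 0 < M) (hαh : 0 < αh) (hMh : 0 < Mh)
    (hc₁ : 0 < c₁) (hc₂ : 0 < c₂) (hcI : 0 < cI) (hcP : 0 < cP)
    (aκ : V →ₗ[ℝ] V →ₗ[ℝ] ℝ)
    (haκc : ∀ v : V, α * ‖v‖ ^ 2 ≤ aκ v v)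
    (haκb : ∀ u v : V, |aκ u v| ≤ M * ‖u‖ * ‖v‖) :
    ∃ C : ℝ, 0 < C ∧
      ∀ (h : ℝ), 0 < h →
      ∀ (Vh : Type) (_ : NormedAddCommGroup Vh), ∀ (_ : NormedSpace ℝ Vh),
      ∀ (_ : FiniteDimensional ℝ Vh),
      ∀ (ℓ : Vh →ₗ[ℝ] V),
      (∀ vh : Vh, c₁ * ‖ℓ vh‖ ≤ ‖vh‖ ∧ ‖vh‖ ≤ c₂ * ‖ℓ vh‖) →
      ∀ (ahκ : Vh →ₗ[ℝ] Vh →ₗ[ℝ] ℝ),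
      (∀ v : Vh, αh * ‖v‖ ^ 2 ≤ ahκ v v) →
      (∀ u v : Vh, |ahκ u v| ≤ Mh * ‖u‖ * ‖v‖) →
      ∀ (Ih : Z →ₗ[ℝ] Vh),
      (∀ η : Z, ‖ιZ η - ℓ (Ih η)‖ ≤ cI * h ^ k * ‖η‖) →
      (∀ vh φh : Vh, |aκ (ℓ vh) (ℓ φh) - ahκ vh φh| ≤ cP * h ^ k * ‖ℓ vh‖ * ‖ℓ φh‖) →
      ∀ (z : Z) (Pz : Vh),
        (∀ φh : Vh, ahκ Pz φh = aκ (ιZ z) (ℓ φh)) →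
        ‖ιZ z - ℓ Pz‖ ≤ C * h ^ k * ‖z‖ := by
  refine ⟨cI + (M * cI + cP * (cE + cI)) / (αh * c₁) / c₁
      + (cE + M * cE / (αh * c₁ ^ 2)) + 1, by positivity, ?_⟩
  intro h hh Vh _ _ _ ℓ hℓ ahκ hahc hahb Ih hIh hpert z Pz hPz
  clear hahb hMh hα haκc hc₂
  have hk0 : (0:ℝ) ≤ h ^ k := by positivity
  have hz0 : (0:ℝ) ≤ ‖z‖ := norm_nonneg _
  have hC1 : cI + (M * cI + cP * (cE + cI)) / (αh * c₁) / c₁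
      ≤ cI + (M * cI + cP * (cE + cI)) / (αh * c₁) / c₁
        + (cE + M * cE / (αh * c₁ ^ 2)) + 1 := by
    have : (0:ℝ) < cE + M * cE / (αh * c₁ ^ 2) := by positivity
    linarith
  have hC2 : cE + M * cE / (αh * c₁ ^ 2)
      ≤ cI + (M * cI + cP * (cE + cI)) / (αh * c₁) / c₁
        + (cE + M * cE / (αh * c₁ ^ 2)) + 1 := by
    have : (0:ℝ) ≤ (M * cI + cP * (cE + cI)) / (αh * c₁) / c₁ := by positivity
    linarith
  by_cases hk1 : h ^ k ≤ 1
  · -- small mesh case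
    set wh : Vh := Ih z - Pz with hwh
    -- bound on the lifted interpolant
    have hnI : ‖ℓ (Ih z)‖ ≤ cE * ‖z‖ + cI * h ^ k * ‖z‖ := by
      have h1 : ‖ℓ (Ih z)‖ ≤ ‖ιZ z‖ + ‖ιZ z - ℓ (Ih z)‖ := by
        have := norm_sub_le (ιZ z) (ιZ z - ℓ (Ih z))
        rwa [sub_sub_cancel] at this
      have h2 := hemb z
      have h3 := hIh z
      linarith
    -- Galerkin-type identity
    have hid : ahκ wh wh
        = aκ (ℓ (Ih z) - ιZ z) (ℓ wh)
          + (ahκ (Ih z) wh - aκ (ℓ (Ih z)) (ℓ wh)) := by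
      have e1 : ahκ wh wh = ahκ (Ih z) wh - aκ (ιZ z) (ℓ wh) := by
        rw [hwh,
          show ahκ (Ih z - Pz) = ahκ (Ih z) - ahκ Pz from map_sub ahκ _ _,
          LinearMap.sub_apply, hPz]
      have e2 : aκ (ℓ (Ih z) - ιZ z) (ℓ wh)
          = aκ (ℓ (Ih z)) (ℓ wh) - aκ (ιZ z) (ℓ wh) := by
        rw [show aκ (ℓ (Ih z) - ιZ z) = aκ (ℓ (Ih z)) - aκ (ιZ z) from
          map_sub aκ _ _, LinearMap.sub_apply]
      rw [e1, e2]; ring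
    -- bound the two error terms
    have hA : aκ (ℓ (Ih z) - ιZ z) (ℓ wh)
        ≤ M * (cI * h ^ k * ‖z‖) * ‖ℓ wh‖ := by
      have hb := (abs_le.mp (haκb (ℓ (Ih z) - ιZ z) (ℓ wh))).2
      have hn : ‖ℓ (Ih z) - ιZ z‖ ≤ cI * h ^ k * ‖z‖ := by
        rw [norm_sub_rev]; exact hIh z
      calc aκ (ℓ (Ih z) - ιZ z) (ℓ wh) ≤ M * ‖ℓ (Ih z) - ιZ z‖ * ‖ℓ wh‖ := hb
        _ ≤ M * (cI * h ^ k * ‖z‖) * ‖ℓ wh‖ :=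
          mul_le_mul_of_nonneg_right (mul_le_mul_of_nonneg_left hn hM.le)
            (norm_nonneg _)
    have hB : ahκ (Ih z) wh - aκ (ℓ (Ih z)) (ℓ wh)
        ≤ cP * h ^ k * ‖ℓ (Ih z)‖ * ‖ℓ wh‖ := by
      have := (abs_le.mp (hpert (Ih z) wh)).1
      linarith
    have hco : αh * ‖wh‖ ^ 2
        ≤ aκ (ℓ (Ih z) - ιZ z) (ℓ wh)
          + (ahκ (Ih z) wh - aκ (ℓ (Ih z)) (ℓ wh)) := by
      have := hahc wh
      rw [hid] at this
      exact this
    have hB' : ahκ (Ih z) wh - aκ (ℓ (Ih z)) (ℓ wh)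
        ≤ cP * h ^ k * ‖ℓ (Ih z)‖ * ‖ℓ wh‖ := hB
    have hwbd : ‖wh‖ ≤ (M * cI + cP * (cE + cI)) / (αh * c₁) * (h ^ k * ‖z‖) :=
      key_small αh c₁ M cI cP cE (h ^ k) ‖z‖ ‖ℓ (Ih z)‖ ‖wh‖ ‖ℓ wh‖
        (aκ (ℓ (Ih z) - ιZ z) (ℓ wh))
        (ahκ (Ih z) wh - aκ (ℓ (Ih z)) (ℓ wh))
        hαh hc₁ hM.le hcI.le hcP.le hcE.le hk0 hk1 hz0 (norm_nonneg _)
        (hℓ wh).1 hnI hA hB' hco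
    have htri : ‖ιZ z - ℓ Pz‖ ≤ ‖ιZ z - ℓ (Ih z)‖ + ‖ℓ wh‖ := by
      have e : ιZ z - ℓ Pz = (ιZ z - ℓ (Ih z)) + ℓ wh := by
        rw [hwh, map_sub]; abel
      rw [e]; exact norm_add_le _ _
    exact final_comb c₁ cI ((M * cI + cP * (cE + cI)) / (αh * c₁)) _ (h ^ k) ‖z‖
      ‖ιZ z - ℓ Pz‖ ‖ιZ z - ℓ (Ih z)‖ ‖ℓ wh‖ ‖wh‖
      hc₁ (by positivity) hcI.le hk0 hz0 htri (hIh z) (hℓ wh).1 hwbd hC1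
  · -- large mesh case : 1 ≤ h ^ k
    push_neg at hk1
    have hav : aκ (ιZ z) (ℓ Pz) ≤ M * (cE * ‖z‖) * ‖ℓ Pz‖ := by
      have hb := (abs_le.mp (haκb (ιZ z) (ℓ Pz))).2
      calc aκ (ιZ z) (ℓ Pz) ≤ M * ‖ιZ z‖ * ‖ℓ Pz‖ := hb
        _ ≤ M * (cE * ‖z‖) * ‖ℓ Pz‖ :=
          mul_le_mul_of_nonneg_right (mul_le_mul_of_nonneg_left (hemb z) hM.le)
            (norm_nonneg _)
    have hco : αh * ‖Pz‖ ^ 2 ≤ aκ (ιZ z) (ℓ Pz) := by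
      have := hahc Pz
      rw [hPz Pz] at this
      exact this
    have hne : ‖ιZ z - ℓ Pz‖ ≤ cE * ‖z‖ + ‖ℓ Pz‖ := by
      have := norm_sub_le (ιZ z) (ℓ Pz)
      have h2 := hemb z
      linarith
    exact final_large αh c₁ M cE _ (h ^ k) ‖z‖ ‖ιZ z - ℓ Pz‖ ‖Pz‖ ‖ℓ Pz‖
      (aκ (ιZ z) (ℓ Pz)) hαh hc₁ hM.le hcE.le hk1.le hz0 (norm_nonneg _)
      (norm_nonneg _) (hℓ Pz).1 hco hav hne hC2
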